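/- Let n ≥ 2, let t ≥ 1 be an integer, let Δ ≥ 1 be real, and define β(x) = (t·log₂(4x))^(2/t). If real numbers satisfy 1/n ≤ ε_0 ≤ ε_1 ≤ … ≤ ε_t ≤ 1, then there exists i ∈ {1,…,t} with ε_{i−1} ≥ ε_i^{β(Δ/2)} · n^{β(Δ/2) − β(Δ)}. -/

import Mathlib

private lemma shell_key {t : ℕ} (ht : 1 ≤ t) {L : ℝ} (hL : (t : ℝ) ≤ L) :
    1 ≤ ((L + (t : ℝ)) ^ ((2:ℝ)/(t:ℝ)) - L ^ ((2:ℝ)/(t:ℝ))) *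
      ∑ k ∈ Finset.range t, (L ^ ((2:ℝ)/(t:ℝ))) ^ k := by
  have ht0 : (0:ℝ) < (t:ℝ) := by exact_mod_cast ht
  have hL1 : (1:ℝ) ≤ L := le_trans (by exact_mod_cast ht) hL
  have hLpos : (0:ℝ) < L := lt_of_lt_of_le one_pos hL1
  rcases eq_or_lt_of_le ht with h1 | h2
  · -- t = 1
    obtain rfl : t = 1 := h1.symm
    have e (x : ℝ) : x ^ ((2:ℝ)/(1:ℝ)) = x ^ (2:ℕ) := by
      rw [← Real.rpow_natCast x 2]; norm_num
    simp only [Nat.cast_one, e, Finset.sum_range_one, pow_zero, mul_one]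
    nlinarith
  · -- 2 ≤ t
    have ht2 : (2:ℝ) ≤ (t:ℝ) := by exact_mod_cast h2
    set p : ℝ := (2:ℝ)/(t:ℝ) with hp
    have hp0 : 0 ≤ p := by positivity
    have hp1 : p ≤ 1 := by rw [hp, div_le_one ht0]; exact ht2
    have hLt0 : (0:ℝ) < L + (t:ℝ) := by linarith
    -- Bernoulli step
    have hs : (-1:ℝ) ≤ L/(L+(t:ℝ)) - 1 := by
      have : (0:ℝ) ≤ L/(L+(t:ℝ)) := by positivity
      linarith
    have hber : (L/(L+(t:ℝ)))^p ≤ 1 + p*(L/(L+(t:ℝ)) - 1) := by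
      have h := rpow_one_add_le_one_add_mul_self hs hp0 hp1
      rwa [show (1:ℝ) + (L/(L+(t:ℝ)) - 1) = L/(L+(t:ℝ)) by ring] at h
    have hsplit : L = (L+(t:ℝ))*(L/(L+(t:ℝ))) := by field_simp
    have hstep1 : L^p ≤ (L+(t:ℝ))^p * (1 + p*(L/(L+(t:ℝ)) - 1)) := by
      calc L^p = ((L+(t:ℝ))*(L/(L+(t:ℝ))))^p := by rw [← hsplit]
        _ = (L+(t:ℝ))^p * (L/(L+(t:ℝ)))^p :=
            Real.mul_rpow hLt0.le (by positivity)
        _ ≤ (L+(t:ℝ))^p * (1 + p*(L/(L+(t:ℝ)) - 1)) :=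
            mul_le_mul_of_nonneg_left hber (Real.rpow_nonneg hLt0.le p)
    have hpow : (L+(t:ℝ))^(p-1) = (L+(t:ℝ))^p / (L+(t:ℝ)) := by
      rw [Real.rpow_sub hLt0, Real.rpow_one]
    have heq : (L+(t:ℝ))^p * (1 + p*(L/(L+(t:ℝ)) - 1))
        = (L+(t:ℝ))^p - 2*(L+(t:ℝ))^(p-1) := by
      rw [hpow, hp]
      field_simp
      ring
    have hgap : 2*(L+(t:ℝ))^(p-1) ≤ (L+(t:ℝ))^p - L^p := by
      rw [heq] at hstep1; linarith
    -- lower bound 2*(L+t)^(p-1) ≥ L^(p-1)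
    have hgap2 : L^(p-1) ≤ 2*(L+(t:ℝ))^(p-1) := by
      have h2L : L + (t:ℝ) ≤ 2*L := by linarith
      have hb1 : (2*L)^(p-1) ≤ (L+(t:ℝ))^(p-1) :=
        Real.rpow_le_rpow_of_nonpos hLt0 h2L (by linarith)
      have hb2 : (2*L)^(p-1) = 2^(p-1) * L^(p-1) :=
        Real.mul_rpow (by norm_num) hLpos.le
      have hb3 : 2 * (2^(p-1) * L^(p-1)) = (2:ℝ)^p * L^(p-1) := by
        rw [← mul_assoc, show (2:ℝ) * 2^(p-1) = 2^(1:ℝ) * 2^(p-1) by rw [Real.rpow_one],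
          ← Real.rpow_add (by norm_num : (0:ℝ) < 2)]
        norm_num
      have hb4 : (1:ℝ) ≤ (2:ℝ)^p := by
        calc (1:ℝ) = (2:ℝ)^(0:ℝ) := by rw [Real.rpow_zero]
          _ ≤ (2:ℝ)^p := Real.rpow_le_rpow_of_exponent_le one_le_two hp0
      calc L^(p-1) = 1 * L^(p-1) := (one_mul _).symm
        _ ≤ (2:ℝ)^p * L^(p-1) :=
            mul_le_mul_of_nonneg_right hb4 (Real.rpow_nonneg hLpos.le _)
        _ = 2 * (2^(p-1) * L^(p-1)) := hb3.symm
        _ = 2 * (2*L)^(p-1) := by rw [hb2]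
        _ ≤ 2*(L+(t:ℝ))^(p-1) := by linarith
    -- sum lower bound
    have hsum : L^(2-p) ≤ ∑ k ∈ Finset.range t, (L^p) ^ k := by
      have hmem : t - 1 ∈ Finset.range t := Finset.mem_range.mpr (by omega)
      have hterm : (L^p) ^ (t-1) = L^(2-p) := by
        rw [← Real.rpow_natCast (L^p) (t-1), ← Real.rpow_mul hLpos.le]
        congr 1
        have : ((t - 1 : ℕ) : ℝ) = (t:ℝ) - 1 := by
          push_cast [Nat.cast_sub ht]; ring
        rw [this, hp]
        field_simp
      calc L^(2-p) = (L^p) ^ (t-1) := hterm.symm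
        _ ≤ ∑ k ∈ Finset.range t, (L^p) ^ k :=
            Finset.single_le_sum (fun i _ => pow_nonneg (Real.rpow_nonneg hLpos.le p) i) hmem
    -- combine
    have hfin : L^(p-1) * L^(2-p) ≤ ((L+(t:ℝ))^p - L^p) * ∑ k ∈ Finset.range t, (L^p) ^ k := by
      apply mul_le_mul (by linarith) hsum (Real.rpow_nonneg hLpos.le _)
      have := Real.rpow_nonneg hLt0.le (p-1)
      linarith
    have hLL : L^(p-1) * L^(2-p) = L := by
      rw [← Real.rpow_add hLpos]
      norm_num
    rw [hLL] at hfin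
    linarith

/-- The shell-selection lemma for the size bound `n^((t·log₂(4Δ))^(2/t))`: with
`β(x) = (t·log₂(4x))^(2/t)`, if `1/n ≤ ε_0 ≤ ε_1 ≤ … ≤ ε_t ≤ 1` (`n ≥ 2`, `t ≥ 1`,
`Δ ≥ 1`), then `ε_{i-1} ≥ ε_i ^ β(Δ/2) · n ^ (β(Δ/2) − β(Δ))` for some `i ∈ {1,…,t}`. -/
theorem shell_selection_aspectRatio
    (n : ℕ) (hn : 2 ≤ n) (t : ℕ) (ht : 1 ≤ t) (Δ : ℝ) (hΔ : 1 ≤ Δ)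
    (ε : ℕ → ℝ)
    (h0 : 1 / (n : ℝ) ≤ ε 0)
    (hmono : ∀ i < t, ε i ≤ ε (i + 1))
    (htop : ε t ≤ 1) :
    ∃ i, 1 ≤ i ∧ i ≤ t ∧
      ε i ^ (((t : ℝ) * Real.logb 2 (4 * (Δ / 2))) ^ ((2 : ℝ) / (t : ℝ))) *
        (n : ℝ) ^ ((((t : ℝ) * Real.logb 2 (4 * (Δ / 2))) ^ ((2 : ℝ) / (t : ℝ))) -
                   (((t : ℝ) * Real.logb 2 (4 * Δ)) ^ ((2 : ℝ) / (t : ℝ)))) ≤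
      ε (i - 1) := by
  have ht0 : (0:ℝ) < (t:ℝ) := by exact_mod_cast ht
  have hΔ0 : (0:ℝ) < Δ := lt_of_lt_of_le one_pos hΔ
  have e1 : (4:ℝ) * (Δ / 2) = 2 * Δ := by ring
  have e2 : (t : ℝ) * Real.logb 2 (4 * Δ) = (t:ℝ) * Real.logb 2 (2*Δ) + (t:ℝ) := by
    rw [show (4:ℝ) * Δ = 2 * (2*Δ) by ring,
      Real.logb_mul (by norm_num) (by positivity),
      Real.logb_self_eq_one (by norm_num : (1:ℝ) < 2)]
    ring
  rw [e1, e2]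
  set L : ℝ := (t:ℝ) * Real.logb 2 (2*Δ) with hLdef
  have hLt : (t:ℝ) ≤ L := by
    have h1 : (1:ℝ) ≤ Real.logb 2 (2*Δ) := by
      rw [← Real.logb_self_eq_one (b := 2) (by norm_num : (1:ℝ) < 2)]
      exact Real.logb_le_logb_of_le one_lt_two two_pos (by linarith)
    nlinarith
  have hL1 : (1:ℝ) ≤ L := le_trans (by exact_mod_cast ht) hLt
  have hLpos : (0:ℝ) < L := lt_of_lt_of_le one_pos hL1
  set a : ℝ := L ^ ((2:ℝ)/(t:ℝ)) with hadef
  set b : ℝ := (L + (t:ℝ)) ^ ((2:ℝ)/(t:ℝ)) with hbdef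
  have ha0 : 0 ≤ a := Real.rpow_nonneg hLpos.le _
  by_contra hcon
  push_neg at hcon
  -- hcon : ∀ i, 1 ≤ i → i ≤ t → ε (i-1) < ε i ^ a * n ^ (a - b)
  have hn1 : (1:ℝ) ≤ (n:ℝ) := by exact_mod_cast (by omega : 1 ≤ n)
  have hnpos : (0:ℝ) < (n:ℝ) := lt_of_lt_of_le one_pos hn1
  have hε0 : 0 < ε 0 := lt_of_lt_of_le (by positivity) h0
  have hmono' : ∀ i, i ≤ t → ε 0 ≤ ε i := by
    intro i
    induction i with
    | zero => intro _; exact le_rfl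
    | succ k ih =>
      intro hk
      exact le_trans (ih (by omega)) (hmono k (by omega))
  have hpos : ∀ i, i ≤ t → 0 < ε i := fun i hi => lt_of_lt_of_le hε0 (hmono' i hi)
  have chain : ∀ k, 1 ≤ k → k ≤ t →
      ε 0 < ε k ^ ((a ^ k : ℝ)) * (n:ℝ) ^ ((a - b) * ∑ j ∈ Finset.range k, a ^ j) := by
    intro k
    induction k with
    | zero => intro h; omega
    | succ k ih =>
      intro _ hkt
      by_cases hk0 : k = 0
      · subst hk0
        have h := hcon 1 le_rfl hkt
        simpa using h
      · have hk1' : 1 ≤ k := Nat.one_le_iff_ne_zero.mpr hk0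
        have hkt' : k ≤ t := Nat.le_of_succ_le hkt
        have IH := ih hk1' hkt'
        have hstep : ε k < ε (k+1) ^ a * (n:ℝ) ^ (a - b) := by
          have h := hcon (k+1) (by omega) hkt
          simpa using h
        have hεk1 : 0 < ε (k+1) := hpos (k+1) hkt
        have h2 : ε k ^ ((a ^ k : ℝ)) ≤ (ε (k+1) ^ a * (n:ℝ) ^ (a - b)) ^ ((a ^ k : ℝ)) :=
          Real.rpow_le_rpow (hpos k hkt').le hstep.le (pow_nonneg ha0 k)
        have hrw : (ε (k+1) ^ a * (n:ℝ) ^ (a - b)) ^ ((a ^ k : ℝ))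
            = ε (k+1) ^ (a * a ^ k) * (n:ℝ) ^ ((a - b) * a ^ k) := by
          rw [Real.mul_rpow (Real.rpow_nonneg hεk1.le _) (Real.rpow_nonneg hnpos.le _),
            ← Real.rpow_mul hεk1.le, ← Real.rpow_mul hnpos.le]
        calc ε 0 < ε k ^ ((a ^ k : ℝ)) * (n:ℝ) ^ ((a - b) * ∑ j ∈ Finset.range k, a ^ j) := IH
          _ ≤ (ε (k+1) ^ (a * a ^ k) * (n:ℝ) ^ ((a - b) * a ^ k))
                * (n:ℝ) ^ ((a - b) * ∑ j ∈ Finset.range k, a ^ j) := by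
              apply mul_le_mul_of_nonneg_right _ (Real.rpow_nonneg hnpos.le _)
              rw [← hrw]; exact h2
          _ = ε (k+1) ^ ((a ^ (k+1) : ℝ))
                * (n:ℝ) ^ ((a - b) * ∑ j ∈ Finset.range (k+1), a ^ j) := by
              rw [mul_assoc, ← Real.rpow_add hnpos, ← pow_succ',
                show (a - b) * a ^ k + (a - b) * ∑ j ∈ Finset.range k, a ^ j
                  = (a - b) * ∑ j ∈ Finset.range (k+1), a ^ j by
                    rw [Finset.sum_range_succ]; ring]
  have hfin := chain t ht le_rfl
  have key : 1 ≤ (b - a) * ∑ k ∈ Finset.range t, a ^ k := shell_key ht hLt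
  have h1 : ε t ^ ((a ^ t : ℝ)) ≤ 1 :=
    Real.rpow_le_one (hpos t le_rfl).le htop (pow_nonneg ha0 t)
  have hexp : (a - b) * (∑ k ∈ Finset.range t, a ^ k) ≤ -1 := by
    have : (a - b) * (∑ k ∈ Finset.range t, a ^ k)
        = -((b - a) * ∑ k ∈ Finset.range t, a ^ k) := by ring
    linarith [key, this.ge, this.le]
  have h2 : (n:ℝ) ^ ((a - b) * ∑ k ∈ Finset.range t, a ^ k) ≤ (n:ℝ) ^ (-1:ℝ) :=
    Real.rpow_le_rpow_of_exponent_le hn1 hexp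
  have hlt : ε 0 < 1 * (n:ℝ) ^ (-1:ℝ) :=
    lt_of_lt_of_le hfin
      (mul_le_mul h1 h2 (Real.rpow_nonneg hnpos.le _) zero_le_one)
  rw [one_mul, Real.rpow_neg_one] at hlt
  rw [one_div] at h0
  exact absurd (lt_of_le_of_lt h0 hlt) (lt_irrefl _)
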